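/- Let K be a differential field of characteristic 0 and let H = A B^{-1} with A, B ∈ K[∂], B ≠ 0, be a fraction of scalar differential operators. Then the following are equivalent: (i) the order of B is minimal among all right fractional decompositions of H; (ii) A and B have no non-invertible common right divisor in K[∂]; (iii) A and B have no common non-zero kernel element in the linear closure of K. -/

import Mathlib

/-- The ring of differential operators K[∂] over a differential field (K, d),
characterized abstractly. -/
structure DiffOpRing (K : Type) [Field K] (d : K → K) (R : Type) [Ring R] where
  ι : K →+* R
  dop : R
  comm : ∀ a : K, dop * ι a = ι a * dop + ι (d a)
  repr : ∀ r : R, ∃! c : ℕ →₀ K, r = c.sum fun i a => ι a * dop ^ i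

/-- The coefficients of a differential operator. -/
noncomputable def DiffOpRing.coeff {K : Type} [Field K] {d : K → K} {R : Type} [Ring R]
    (S : DiffOpRing K d R) (r : R) : ℕ →₀ K := (S.repr r).choose

/-- The order of a differential operator. -/
noncomputable def DiffOpRing.ord {K : Type} [Field K] {d : K → K} {R : Type} [Ring R]
    (S : DiffOpRing K d R) (r : R) : ℕ := (S.coeff r).support.sup id

namespace DiffOpRing

variable {K : Type} [Field K] {d : K → K} {R : Type} [Ring R] (S : DiffOpRing K d R)

/-- Build an operator from coefficients. -/
noncomputable def E (c : ℕ →₀ K) : R := c.sum fun i a => S.ι a * S.dop ^ i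

lemma E_coeff (r : R) : S.E (S.coeff r) = r := ((S.repr r).choose_spec.1).symm

lemma coeff_unique {r : R} {c : ℕ →₀ K} (h : r = S.E c) : S.coeff r = c :=
  ((S.repr r).choose_spec.2 c h).symm

lemma coeff_E (c : ℕ →₀ K) : S.coeff (S.E c) = c := S.coeff_unique rfl

lemma E_zero : S.E 0 = 0 := Finsupp.sum_zero_index

lemma E_add (c c' : ℕ →₀ K) : S.E (c + c') = S.E c + S.E c' :=
  Finsupp.sum_add_index' (fun i => by simp) (fun i b₁ b₂ => by rw [map_add, add_mul])

/-- `E` as an additive monoid hom. -/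
noncomputable def Ehom : (ℕ →₀ K) →+ R := AddMonoidHom.mk' S.E S.E_add

@[simp] lemma Ehom_apply (c : ℕ →₀ K) : S.Ehom c = S.E c := rfl

lemma coeff_zero : S.coeff (0 : R) = 0 := S.coeff_unique S.E_zero.symm

lemma coeff_add (r r' : R) : S.coeff (r + r') = S.coeff r + S.coeff r' :=
  S.coeff_unique (by rw [S.E_add, S.E_coeff, S.E_coeff])

/-- `coeff` as an additive monoid hom. -/
noncomputable def coeffHom : R →+ (ℕ →₀ K) := AddMonoidHom.mk' S.coeff S.coeff_add

@[simp] lemma coeffHom_apply (r : R) : S.coeffHom r = S.coeff r := rfl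

/-- coefficient at k, as an additive monoid hom. -/
noncomputable def coeffk (k : ℕ) : R →+ K :=
  (Finsupp.applyAddHom k).comp S.coeffHom

@[simp] lemma coeffk_apply (k : ℕ) (r : R) : S.coeffk k r = S.coeff r k := rfl

lemma coeff_eq_zero_iff (r : R) : S.coeff r = 0 ↔ r = 0 := by
  constructor
  · intro h; rw [← S.E_coeff r, h, S.E_zero]
  · intro h; rw [h, S.coeff_zero]

lemma E_single (i : ℕ) (a : K) : S.E (Finsupp.single i a) = S.ι a * S.dop ^ i :=
  Finsupp.sum_single_index (by simp)

lemma E_smul (a : K) (c : ℕ →₀ K) : S.E (a • c) = S.ι a * S.E c := by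
  unfold E
  rw [Finsupp.sum_smul_index (fun i => by simp), Finsupp.mul_sum]
  refine Finsupp.sum_congr fun i _ => by rw [map_mul, mul_assoc]

lemma E_mapDomain (n : ℕ) (c : ℕ →₀ K) :
    S.E (Finsupp.mapDomain (· + n) c) = S.E c * S.dop ^ n := by
  unfold E
  rw [Finsupp.sum_mapDomain_index (fun i => by simp)
    (fun i b₁ b₂ => by rw [map_add, add_mul]), Finsupp.sum_mul]
  refine Finsupp.sum_congr fun i _ => by rw [pow_add, mul_assoc]

variable (hd0 : d 0 = 0)

/-- Multiplying by `dop` on the left shifts the coefficients. -/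
noncomputable def shift (c : ℕ →₀ K) : ℕ →₀ K :=
  Finsupp.mapDomain (· + 1) c + Finsupp.mapRange d hd0 c

lemma E_shift (c : ℕ →₀ K) : S.dop * S.E c = S.E (shift hd0 c) := by
  unfold shift
  rw [S.E_add, S.E_mapDomain, pow_one]
  unfold E
  rw [Finsupp.mul_sum, Finsupp.sum_mul, Finsupp.sum_mapRange_index (fun i => by simp),
    ← Finsupp.sum_add]
  refine Finsupp.sum_congr fun i _ => ?_
  rw [← mul_assoc, S.comm, add_mul, mul_assoc, mul_assoc]
  congr 2
  rw [← pow_succ', pow_succ]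

lemma shift_apply_succ (c : ℕ →₀ K) (k : ℕ) :
    shift hd0 c (k + 1) = c k + d (c (k + 1)) := by
  unfold shift
  rw [Finsupp.add_apply, Finsupp.mapRange_apply]
  congr 1
  exact Finsupp.mapDomain_apply (add_left_injective 1) c k

lemma shift_apply_zero (c : ℕ →₀ K) : shift hd0 c 0 = d (c 0) := by
  unfold shift
  rw [Finsupp.add_apply, Finsupp.mapRange_apply]
  rw [Finsupp.mapDomain_notin_range, zero_add]
  rintro ⟨k, hk⟩
  exact absurd hk (Nat.succ_ne_zero k)

include hd0 in
/-- `dop^m * ι b` has top coefficient `b` at index `m`. -/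
lemma pow_mul_iota (m : ℕ) (b : K) :
    ∃ c : ℕ →₀ K, S.dop ^ m * S.ι b = S.E c ∧ c m = b ∧ ∀ i, m < i → c i = 0 := by
  induction m with
  | zero =>
    refine ⟨Finsupp.single 0 b, ?_, by simp, fun i hi => Finsupp.single_eq_of_ne (by omega)⟩
    rw [S.E_single]; simp
  | succ m ih =>
    obtain ⟨c, hc, hm, hv⟩ := ih
    refine ⟨shift hd0 c, ?_, ?_, ?_⟩
    · rw [pow_succ', mul_assoc, hc, S.E_shift]
    · rw [shift_apply_succ, hm, hv (m+1) (by omega), hd0, add_zero]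
    · intro i hi
      cases i with
      | zero => omega
      | succ k =>
        rw [shift_apply_succ, hv k (by omega), hv (k+1) (by omega), hd0, add_zero]

include hd0 in
/-- product of monomials: top coefficient. -/
lemma monomial_mul (a : K) (m : ℕ) (b : K) (n : ℕ) :
    ∃ c : ℕ →₀ K, (S.ι a * S.dop ^ m) * (S.ι b * S.dop ^ n) = S.E c ∧
      c (m + n) = a * b ∧ ∀ i, m + n < i → c i = 0 := by
  obtain ⟨c, hc, hm, hv⟩ := S.pow_mul_iota hd0 m b
  refine ⟨a • Finsupp.mapDomain (· + n) c, ?_, ?_, ?_⟩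
  · rw [S.E_smul, S.E_mapDomain, ← hc]
    rw [mul_assoc, mul_assoc]
  · rw [Finsupp.smul_apply, Finsupp.mapDomain_apply (add_left_injective n) c m, hm,
      smul_eq_mul]
  · intro i hi
    rw [Finsupp.smul_apply, smul_eq_mul]
    rcases Nat.lt_or_ge i n with h | h
    · rw [Finsupp.mapDomain_notin_range, mul_zero]
      rintro ⟨k, hk⟩; omega
    · obtain ⟨k, rfl⟩ := Nat.exists_eq_add_of_le h
      rw [add_comm n k, Finsupp.mapDomain_apply (add_left_injective n) c k,
        hv k (by omega), mul_zero]


lemma coeff_eq_zero_of_ord_lt {r : R} {i : ℕ} (h : S.ord r < i) : S.coeff r i = 0 := by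
  by_contra hne
  have h1 : i ≤ S.ord r := Finset.le_sup (f := id) (Finsupp.mem_support_iff.2 hne)
  omega

lemma coeff_ord_ne_zero {r : R} (h : r ≠ 0) : S.coeff r (S.ord r) ≠ 0 := by
  have hne : (S.coeff r).support.Nonempty := by
    rw [Finsupp.support_nonempty_iff]
    exact fun hc => h ((S.coeff_eq_zero_iff r).1 hc)
  obtain ⟨i, hi, hsup⟩ := Finset.exists_mem_eq_sup _ hne id
  rw [ord, hsup]
  exact Finsupp.mem_support_iff.1 hi

lemma ord_le_of_vanish {r : R} {n : ℕ} (h : ∀ i, n < i → S.coeff r i = 0) :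
    S.ord r ≤ n := by
  refine Finset.sup_le fun i hi => ?_
  show i ≤ n
  by_contra hlt
  exact absurd (h i (by omega)) (Finsupp.mem_support_iff.1 hi)

include hd0 in
/-- coefficients of a product, at and above the top. -/
lemma coeff_mul_top {r s : R} {m n : ℕ}
    (hr : ∀ i, m < i → S.coeff r i = 0) (hs : ∀ j, n < j → S.coeff s j = 0) :
    (∀ k, m + n < k → S.coeff (r * s) k = 0) ∧
      S.coeff (r * s) (m + n) = S.coeff r m * S.coeff s n := by
  classical
  set cr := S.coeff r with hcr
  set cs := S.coeff s with hcs
  -- choose coefficient data for each monomial product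
  have hmono : ∀ i j : ℕ, ∃ c : ℕ →₀ K,
      (S.ι (cr i) * S.dop ^ i) * (S.ι (cs j) * S.dop ^ j) = S.E c ∧
      c (i + j) = cr i * cs j ∧ ∀ t, i + j < t → c t = 0 :=
    fun i j => S.monomial_mul hd0 (cr i) i (cs j) j
  choose cc hcc hcctop hccvan using hmono
  have hrs : r * s = ∑ i ∈ cr.support, ∑ j ∈ cs.support, S.E (cc i j) := by
    conv_lhs => rw [← S.E_coeff r, ← S.E_coeff s]
    rw [← hcr, ← hcs]
    unfold E
    rw [Finsupp.sum_mul]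
    unfold Finsupp.sum
    refine Finset.sum_congr rfl fun i _ => ?_
    show (S.ι (cr i) * S.dop ^ i) * (∑ j ∈ cs.support, S.ι (cs j) * S.dop ^ j) = _
    rw [Finset.mul_sum]
    exact Finset.sum_congr rfl fun j _ => hcc i j
  have hco : ∀ k, S.coeff (r * s) k = ∑ i ∈ cr.support, ∑ j ∈ cs.support, cc i j k := by
    intro k
    have : S.coeffk k (r * s) = ∑ i ∈ cr.support, ∑ j ∈ cs.support, S.coeffk k (S.E (cc i j)) := by
      rw [hrs, map_sum]
      exact Finset.sum_congr rfl fun i _ => map_sum _ _ _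
    simpa only [coeffk_apply, coeff_E] using this
  have hsupr : ∀ i ∈ cr.support, i ≤ m := by
    intro i hi
    by_contra hlt
    exact absurd (hr i (by omega)) (Finsupp.mem_support_iff.1 hi)
  have hsups : ∀ j ∈ cs.support, j ≤ n := by
    intro j hj
    by_contra hlt
    exact absurd (hs j (by omega)) (Finsupp.mem_support_iff.1 hj)
  constructor
  · intro k hk
    rw [hco]
    refine Finset.sum_eq_zero fun i hi => Finset.sum_eq_zero fun j hj => ?_
    exact hccvan i j k (by have := hsupr i hi; have := hsups j hj; omega)
  · rw [hco]
    by_cases him : m ∈ cr.support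
    · rw [Finset.sum_eq_single_of_mem m him]
      · by_cases hjn : n ∈ cs.support
        · rw [Finset.sum_eq_single_of_mem n hjn]
          · exact hcctop m n
          · intro j hj hjne
            exact hccvan m j (m + n) (by have := hsups j hj; omega)
        · have h0 : cs n = 0 := by rwa [Finsupp.notMem_support_iff] at hjn
          rw [h0, mul_zero]
          refine Finset.sum_eq_zero fun j hj => ?_
          have hjne : j ≠ n := fun he => hjn (he ▸ hj)
          exact hccvan m j (m + n) (by have := hsups j hj; omega)
      · intro i hi hine
        refine Finset.sum_eq_zero fun j hj => ?_
        exact hccvan i j (m + n) (by have h1 := hsupr i hi; have := hsups j hj; omega)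
    · have h0 : cr m = 0 := by rwa [Finsupp.notMem_support_iff] at him
      rw [h0, zero_mul]
      refine Finset.sum_eq_zero fun i hi => Finset.sum_eq_zero fun j hj => ?_
      have hine : i ≠ m := fun he => him (he ▸ hi)
      exact hccvan i j (m + n) (by have := hsupr i hi; have := hsups j hj; omega)

include hd0 in
lemma mul_props {r s : R} (hr : r ≠ 0) (hs : s ≠ 0) :
    r * s ≠ 0 ∧ S.ord (r * s) = S.ord r + S.ord s ∧
      S.coeff (r * s) (S.ord r + S.ord s) = S.coeff r (S.ord r) * S.coeff s (S.ord s) := by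
  obtain ⟨hvan, htop⟩ := S.coeff_mul_top hd0 (r := r) (s := s)
    (fun i hi => S.coeff_eq_zero_of_ord_lt hi) (fun j hj => S.coeff_eq_zero_of_ord_lt hj)
  have htopne : S.coeff (r * s) (S.ord r + S.ord s) ≠ 0 := by
    rw [htop]
    exact mul_ne_zero (S.coeff_ord_ne_zero hr) (S.coeff_ord_ne_zero hs)
  have hne : r * s ≠ 0 := fun h => htopne (by rw [h, S.coeff_zero]; rfl)
  refine ⟨hne, le_antisymm (S.ord_le_of_vanish hvan) ?_, htop⟩
  exact Finset.le_sup (f := id) (Finsupp.mem_support_iff.2 htopne)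

include S hd0 in
lemma mul_ne_zero' {r s : R} (hr : r ≠ 0) (hs : s ≠ 0) : r * s ≠ 0 := by
  exact (S.mul_props hd0 hr hs).1

include S hd0 in
lemma ord_mul {r s : R} (hr : r ≠ 0) (hs : s ≠ 0) :
    S.ord (r * s) = S.ord r + S.ord s := by exact (S.mul_props hd0 hr hs).2.1

lemma coeff_one : S.coeff (1 : R) = Finsupp.single 0 1 :=
  S.coeff_unique (by rw [S.E_single, pow_zero, map_one, one_mul])

lemma ord_one : S.ord (1 : R) = 0 := by
  rw [ord, coeff_one, Finsupp.support_single_ne_zero 0 one_ne_zero]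
  rfl

lemma eq_iota_of_ord_zero {r : R} (h : S.ord r = 0) : r = S.ι (S.coeff r 0) := by
  have : S.coeff r = Finsupp.single 0 (S.coeff r 0) := by
    ext i
    cases i with
    | zero => simp
    | succ k =>
      rw [S.coeff_eq_zero_of_ord_lt (by omega), Finsupp.single_eq_of_ne (by omega)]
  conv_lhs => rw [← S.E_coeff r, this, S.E_single, pow_zero, mul_one]

include hd0 in
lemma isUnit_iff [Nontrivial R] {D : R} : IsUnit D ↔ D ≠ 0 ∧ S.ord D = 0 := by
  constructor
  · rintro ⟨u, rfl⟩
    have hu : (u : R) ≠ 0 := Units.ne_zero u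
    have hui : ((u⁻¹ : Rˣ) : R) ≠ 0 := Units.ne_zero _
    have h1 : (u : R) * (u⁻¹ : Rˣ) = 1 := u.mul_inv
    have := S.ord_mul hd0 hu hui
    rw [h1, S.ord_one] at this
    exact ⟨hu, by omega⟩
  · rintro ⟨h0, hord⟩
    have ha : S.coeff D 0 ≠ 0 := by
      have := S.coeff_ord_ne_zero h0
      rwa [hord] at this
    rw [S.eq_iota_of_ord_zero hord]
    exact ⟨⟨S.ι (S.coeff D 0), S.ι (S.coeff D 0)⁻¹,
      by rw [← map_mul, mul_inv_cancel₀ ha, map_one],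
      by rw [← map_mul, inv_mul_cancel₀ ha, map_one]⟩, rfl⟩

lemma coeff_sub (r r' : R) : S.coeff (r - r') = S.coeff r - S.coeff r' :=
  map_sub S.coeffHom r r'

include hd0 in
/-- Euclidean division on the right. -/
lemma euclid (B : R) (hB : B ≠ 0) (A : R) :
    ∃ Q r : R, A = Q * B + r ∧ (r = 0 ∨ S.ord r < S.ord B) := by
  by_cases hA0 : A = 0
  · exact ⟨0, 0, by rw [hA0, zero_mul, add_zero], Or.inl rfl⟩
  generalize hn : S.ord A = n
  induction n using Nat.strong_induction_on generalizing A with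
  | _ n ih =>
  subst hn
  by_cases hlt : S.ord A < S.ord B
  · exact ⟨0, A, by rw [zero_mul, zero_add], Or.inr hlt⟩
  push_neg at hlt
  set q : R := S.ι (S.coeff A (S.ord A) * (S.coeff B (S.ord B))⁻¹) * S.dop ^ (S.ord A - S.ord B)
    with hq
  have hqco : S.coeff q = Finsupp.single (S.ord A - S.ord B)
      (S.coeff A (S.ord A) * (S.coeff B (S.ord B))⁻¹) := S.coeff_unique (S.E_single _ _).symm
  have hlA : S.coeff A (S.ord A) ≠ 0 := S.coeff_ord_ne_zero hA0
  have hlB : S.coeff B (S.ord B) ≠ 0 := S.coeff_ord_ne_zero hB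
  have hq0 : q ≠ 0 := by
    intro h
    have := S.coeff_zero (R := R)
    rw [h] at hqco
    rw [S.coeff_zero] at hqco
    have := Finsupp.single_eq_zero.1 hqco.symm
    exact (mul_ne_zero hlA (inv_ne_zero hlB)) this
  have hqord : S.ord q = S.ord A - S.ord B := by
    rw [ord, hqco, Finsupp.support_single_ne_zero _ (mul_ne_zero hlA (inv_ne_zero hlB))]
    simp
  have hqlead : S.coeff q (S.ord A - S.ord B) = S.coeff A (S.ord A) * (S.coeff B (S.ord B))⁻¹ := by
    rw [hqco, Finsupp.single_eq_same]
  obtain ⟨hqB0, hqBord, hqBlead⟩ := S.mul_props hd0 hq0 hB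
  rw [hqord] at hqBord hqBlead
  rw [Nat.sub_add_cancel hlt] at hqBord hqBlead
  rw [hqlead] at hqBlead
  rw [inv_mul_cancel_right₀ hlB] at hqBlead
  -- A - q * B vanishes at and above ord A
  have hvan : ∀ i, S.ord A ≤ i → S.coeff (A - q * B) i = 0 := by
    intro i hi
    rw [S.coeff_sub, Finsupp.sub_apply]
    rcases Nat.eq_or_lt_of_le hi with rfl | hi'
    · rw [hqBlead, sub_self]
    · rw [S.coeff_eq_zero_of_ord_lt hi', S.coeff_eq_zero_of_ord_lt (by omega), sub_self]
  by_cases hr0 : A - q * B = 0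
  · refine ⟨q, 0, ?_, Or.inl rfl⟩
    rw [add_zero]
    exact sub_eq_zero.1 hr0
  · have hordlt : S.ord (A - q * B) < S.ord A := by
      have h1 : S.ord (A - q * B) ≤ S.ord A := S.ord_le_of_vanish fun i hi => hvan i (by omega)
      rcases Nat.eq_or_lt_of_le h1 with he | h2
      · exact absurd (hvan _ (le_of_eq he.symm)) (S.coeff_ord_ne_zero hr0)
      · omega
    obtain ⟨Q', r', hQr, hror⟩ := ih (S.ord (A - q * B)) (by omega) (A - q * B) hr0 rfl
    refine ⟨q + Q', r', ?_, hror⟩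
    rw [add_mul, add_assoc, ← hQr]
    abel

include S hd0 in
/-- Right Bezout / gcd. -/
lemma bezout (A B : R) : ∃ G U V P₁ P₂ : R, G = U * A + V * B ∧ A = P₁ * G ∧ B = P₂ * G := by
  generalize hn : S.ord B = n
  induction n using Nat.strong_induction_on generalizing A B with
  | _ n ih =>
  by_cases hB0 : B = 0
  · exact ⟨A, 1, 0, 1, 0, by rw [one_mul, zero_mul, add_zero], (one_mul A).symm,
      by rw [hB0, zero_mul]⟩
  obtain ⟨Q, r, hdiv, hror⟩ := S.euclid hd0 B hB0 A
  rcases hror with hr0 | hrlt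
  · exact ⟨B, 0, 1, Q, 1, by rw [zero_mul, one_mul, zero_add],
      by rw [hdiv, hr0, add_zero], (one_mul B).symm⟩
  · subst hn
    obtain ⟨G, U, V, P₁, P₂, hG, hP1, hP2⟩ := ih (S.ord r) hrlt B r rfl
    refine ⟨G, V, U - V * Q, Q * P₁ + P₂, P₁, ?_, ?_, hP1⟩
    · rw [hG]
      conv_rhs => rw [hdiv]
      noncomm_ring
    · conv_lhs => rw [hdiv, hP1, hP2]
      noncomm_ring

include hd0 in
/-- The equivalence (i) ↔ (ii). -/
lemma first_iff (A B : R) (hB : B ≠ 0) :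
    (∀ C D : R, D ≠ 0 →
        (∃ E F : R, E ≠ 0 ∧ F ≠ 0 ∧ A * E = C * F ∧ B * E = D * F) →
        S.ord B ≤ S.ord D) ↔
      (∀ A₁ B₁ D : R, A = A₁ * D → B = B₁ * D → IsUnit D) := by
  haveI : Nontrivial R := nontrivial_of_ne B 0 hB
  constructor
  · intro hmin A₁ B₁ D hA hBb
    have hD0 : D ≠ 0 := fun h => hB (by rw [hBb, h, mul_zero])
    have hB₁0 : B₁ ≠ 0 := fun h => hB (by rw [hBb, h, zero_mul])
    have hle := hmin A₁ B₁ hB₁0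
      ⟨1, D, one_ne_zero, hD0, by rw [mul_one, hA], by rw [mul_one, hBb]⟩
    have hords : S.ord B = S.ord B₁ + S.ord D := by
      rw [hBb]; exact S.ord_mul hd0 hB₁0 hD0
    rw [S.isUnit_iff hd0]
    exact ⟨hD0, by omega⟩
  · rintro hcop C D hD0 ⟨E, F, hE0, hF0, hAE, hBE⟩
    obtain ⟨G, U, V, P₁, P₂, hG, hA1, hB1⟩ := S.bezout hd0 A B
    obtain ⟨u, hu⟩ := hcop P₁ P₂ G hA1 hB1
    have hWG : ((u⁻¹ : Rˣ) : R) * G = 1 := by rw [← hu]; exact u.inv_mul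
    set W := ((u⁻¹ : Rˣ) : R) with hW
    set G₂ := W*U*C + W*V*D with hG2
    have hE : E = G₂ * F := by
      have h2 : E = W*U*(A*E) + W*V*(B*E) := by
        calc E = 1 * E := (one_mul E).symm
        _ = (W*(U*A + V*B)) * E := by rw [← hG, hWG]
        _ = W*U*(A*E) + W*V*(B*E) := by noncomm_ring
      rw [h2, hAE, hBE, hG2]; noncomm_ring
    have hGF0 : G₂ ≠ 0 := by
      intro h; rw [h, zero_mul] at hE; exact hE0 hE
    have h3 : (D - B * G₂) * F = 0 := by
      rw [sub_mul, mul_assoc, ← hE, hBE, sub_self]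
    have h4 : D - B * G₂ = 0 := by
      by_contra hne
      exact S.mul_ne_zero' hd0 hne hF0 h3
    have hDB : D = B * G₂ := sub_eq_zero.1 h4
    rw [hDB, S.ord_mul hd0 hB hGF0]
    omega

section Action

variable {L : Type} [Field L] (ιL : K →+* L) (dL : L → L)

/-- Apply an operator to an element of a differential field extension. -/
noncomputable def ev (r : R) (x : L) : L := (S.coeff r).sum fun i a => ιL a * dL^[i] x

variable (hLadd : ∀ a b : L, dL (a + b) = dL a + dL b)
  (hLmul : ∀ a b : L, dL (a * b) = a * dL b + dL a * b)
  (hLext : ∀ x : K, dL (ιL x) = ιL (d x))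

include hLadd in
lemma dL_zero : dL 0 = 0 := by
  have := hLadd 0 0
  rw [add_zero] at this
  exact (left_eq_add.1 this)

include hLadd in
lemma dL_iter_zero (i : ℕ) : dL^[i] (0 : L) = 0 := by
  induction i with
  | zero => rfl
  | succ i ih => rw [Function.iterate_succ_apply', ih, dL_zero dL hLadd]

include hLadd in
lemma ev_zero_right (r : R) : S.ev ιL dL r (0 : L) = 0 := by
  unfold ev Finsupp.sum
  refine Finset.sum_eq_zero fun i _ => ?_
  show ιL ((S.coeff r) i) * dL^[i] (0 : L) = 0
  rw [dL_iter_zero dL hLadd, mul_zero]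

lemma ev_add_left (r r' : R) (x : L) :
    S.ev ιL dL (r + r') x = S.ev ιL dL r x + S.ev ιL dL r' x := by
  unfold ev
  rw [S.coeff_add, Finsupp.sum_add_index' (fun i => by simp)
    (fun i b₁ b₂ => by rw [map_add, add_mul])]

lemma ev_zero_left (x : L) : S.ev ιL dL (0 : R) x = 0 := by
  unfold ev
  rw [S.coeff_zero, Finsupp.sum_zero_index]

/-- `ev` at a point as additive hom in the operator. -/
noncomputable def evHom (x : L) : R →+ L :=
  AddMonoidHom.mk' (fun r => S.ev ιL dL r x) (fun r r' => S.ev_add_left ιL dL r r' x)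

@[simp] lemma evHom_apply (x : L) (r : R) : S.evHom ιL dL x r = S.ev ιL dL r x := rfl

lemma ev_E (c : ℕ →₀ K) (x : L) :
    S.ev ιL dL (S.E c) x = c.sum fun i a => ιL a * dL^[i] x := by
  unfold ev
  rw [S.coeff_E]

lemma ev_one (x : L) : S.ev ιL dL (1 : R) x = x := by
  unfold ev
  rw [S.coeff_one, Finsupp.sum_single_index (by simp)]
  simp

lemma ev_iota_mul (a : K) (r : R) (x : L) :
    S.ev ιL dL (S.ι a * r) x = ιL a * S.ev ιL dL r x := by
  have h : S.ι a * r = S.E (a • S.coeff r) := by rw [S.E_smul, S.E_coeff]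
  unfold ev
  rw [S.coeff_unique h, Finsupp.sum_smul_index (fun i => by simp), Finsupp.mul_sum]
  exact Finsupp.sum_congr fun i _ => by rw [map_mul, mul_assoc]

include hd0 hLadd hLmul hLext in
lemma ev_dop_mul (r : R) (x : L) :
    S.ev ιL dL (S.dop * r) x = dL (S.ev ιL dL r x) := by
  have h : S.dop * r = S.E (shift hd0 (S.coeff r)) := by rw [← S.E_shift, S.E_coeff]
  unfold ev
  rw [S.coeff_unique h]
  unfold shift
  rw [Finsupp.sum_add_index' (fun i => by simp) (fun i b₁ b₂ => by rw [map_add, add_mul]),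
    Finsupp.sum_mapDomain_index (fun i => by simp) (fun i b₁ b₂ => by rw [map_add, add_mul]),
    Finsupp.sum_mapRange_index (fun i => by simp)]
  have hdsum : dL ((S.coeff r).sum fun i a => ιL a * dL^[i] x) =
      (S.coeff r).sum fun i a => dL (ιL a * dL^[i] x) :=
    map_finsuppSum (AddMonoidHom.mk' dL hLadd) _ _
  rw [hdsum, ← Finsupp.sum_add]
  refine Finsupp.sum_congr fun i _ => ?_
  rw [hLmul, hLext, Function.iterate_succ_apply']

include hd0 hLadd hLmul hLext in
lemma ev_dop_pow_mul (i : ℕ) (r : R) (x : L) :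
    S.ev ιL dL (S.dop ^ i * r) x = dL^[i] (S.ev ιL dL r x) := by
  induction i with
  | zero => rw [pow_zero, one_mul]; rfl
  | succ i ih =>
    rw [pow_succ', mul_assoc, S.ev_dop_mul hd0 ιL dL hLadd hLmul hLext, ih]
    exact (Function.iterate_succ_apply' dL i _).symm

include hd0 hLadd hLmul hLext in
lemma ev_mul (r s : R) (x : L) :
    S.ev ιL dL (r * s) x = S.ev ιL dL r (S.ev ιL dL s x) := by
  have h1 : r * s = (S.coeff r).sum fun i a => (S.ι a * S.dop ^ i) * s := by
    conv_lhs => rw [← S.E_coeff r]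
    unfold E
    rw [Finsupp.sum_mul]
  have h2 : S.ev ιL dL (r * s) x
      = (S.coeff r).sum fun i a => S.ev ιL dL ((S.ι a * S.dop ^ i) * s) x := by
    conv_lhs => rw [h1]
    exact map_finsuppSum (S.evHom ιL dL x) _ _
  rw [h2]
  conv_rhs => rw [show S.ev ιL dL r (S.ev ιL dL s x)
    = (S.coeff r).sum fun i a => ιL a * dL^[i] (S.ev ιL dL s x) from rfl]
  refine Finsupp.sum_congr fun i _ => ?_
  rw [mul_assoc, S.ev_iota_mul, S.ev_dop_pow_mul hd0 ιL dL hLadd hLmul hLext]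

include hd0 hLadd hLmul hLext in
/-- (ii) → (iii): coprime operators have no common kernel. -/
lemma no_common_kernel (A B : R)
    (hcop : ∀ A₁ B₁ D : R, A = A₁ * D → B = B₁ * D → IsUnit D)
    (x : L) (hA : S.ev ιL dL A x = 0) (hBx : S.ev ιL dL B x = 0) : x = 0 := by
  obtain ⟨G, U, V, P₁, P₂, hG, hA1, hB1⟩ := S.bezout hd0 A B
  obtain ⟨u, hu⟩ := hcop P₁ P₂ G hA1 hB1
  have hWG : ((u⁻¹ : Rˣ) : R) * G = 1 := by rw [← hu]; exact u.inv_mul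
  set W := ((u⁻¹ : Rˣ) : R) with hWdef
  have h1 : (1 : R) = (W * U) * A + (W * V) * B := by
    rw [← hWG, hG]
    noncomm_ring
  calc x = S.ev ιL dL (1 : R) x := (S.ev_one ιL dL x).symm
  _ = S.ev ιL dL ((W * U) * A) x + S.ev ιL dL ((W * V) * B) x := by
      rw [← S.ev_add_left, ← h1]
  _ = 0 := by
      rw [S.ev_mul hd0 ιL dL hLadd hLmul hLext (W * U) A,
        S.ev_mul hd0 ιL dL hLadd hLmul hLext (W * V) B,
        hA, hBx, S.ev_zero_right ιL dL hLadd, S.ev_zero_right ιL dL hLadd, add_zero]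

end Action
end DiffOpRing


section PS

open PowerSeries

variable {K : Type} [Field K] (d : K → K)

/-- coefficientwise application of `d`. -/
noncomputable def psD1 (f : PowerSeries K) : PowerSeries K :=
  PowerSeries.mk fun n => d (PowerSeries.coeff n f)

/-- the derivation `d` on coefficients plus formal derivative. -/
noncomputable def psD (f : PowerSeries K) : PowerSeries K :=
  psD1 d f + f.derivativeFun

variable (hd_add : ∀ a b : K, d (a + b) = d a + d b)
  (hd_mul : ∀ a b : K, d (a * b) = a * d b + d a * b)

include hd_add in
lemma psD1_add (f g : PowerSeries K) : psD1 d (f + g) = psD1 d f + psD1 d g := by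
  ext n
  simp only [psD1, coeff_mk, map_add]
  rw [hd_add]

include hd_add hd_mul in
lemma psD1_mul (f g : PowerSeries K) :
    psD1 d (f * g) = f * psD1 d g + psD1 d f * g := by
  ext n
  simp only [psD1, map_add, coeff_mk, PowerSeries.coeff_mul]
  have hds : d (∑ p ∈ Finset.HasAntidiagonal.antidiagonal n, coeff p.1 f * coeff p.2 g)
      = ∑ p ∈ Finset.HasAntidiagonal.antidiagonal n, d (coeff p.1 f * coeff p.2 g) :=
    map_sum (AddMonoidHom.mk' d hd_add) _ _
  rw [hds, Finset.sum_congr rfl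
    (fun p _ => hd_mul (coeff p.1 f) (coeff p.2 g)), Finset.sum_add_distrib]

include hd_add in
lemma psD_add (f g : PowerSeries K) : psD d (f + g) = psD d f + psD d g := by
  unfold psD
  rw [psD1_add d hd_add, derivativeFun_add]
  abel

include hd_add hd_mul in
lemma psD_mul (f g : PowerSeries K) :
    psD d (f * g) = f * psD d g + psD d f * g := by
  unfold psD
  rw [psD1_mul d hd_add hd_mul, derivativeFun_mul, smul_eq_mul, smul_eq_mul]
  ring

include hd_add in
lemma psD_C (a : K) : psD d (PowerSeries.C a) = PowerSeries.C (d a) := by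
  have hd0 : d 0 = 0 := by
    have := hd_add 0 0
    rw [add_zero] at this
    exact (left_eq_add.1 this)
  unfold psD
  rw [show (PowerSeries.C a).derivativeFun = derivative K (PowerSeries.C a) from rfl, derivativeFun_C, add_zero]
  ext n
  simp only [psD1, coeff_mk, PowerSeries.coeff_C]
  split_ifs with h
  · rfl
  · exact hd0

end PS

section Sol

open PowerSeries

variable {K : Type} [Field K] [CharZero K] (d : K → K) (n : ℕ) (a : ℕ → K)

/-- companion matrix action. -/
noncomputable def Mmat (v : Fin n → K) (j : Fin n) : K :=
  if h : (j : ℕ) + 1 < n then v ⟨(j : ℕ) + 1, h⟩ else -(∑ l : Fin n, (a l / a n) * v l)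

/-- coefficient recursion for the solution vector. -/
noncomputable def solY : ℕ → Fin n → K
  | 0 => fun j => if (j : ℕ) = 0 then 1 else 0
  | k + 1 => fun j => ((k : K) + 1)⁻¹ * (Mmat n a (solY k) j - d (solY k j))

/-- the solution components, as power series. -/
noncomputable def solX (j : Fin n) : PowerSeries K :=
  PowerSeries.mk fun k => solY d n a k j

lemma psD_solX (j : Fin n) :
    psD d (solX d n a j) = if h : (j : ℕ) + 1 < n then solX d n a ⟨(j : ℕ) + 1, h⟩
      else -(∑ l : Fin n, PowerSeries.C (a l / a n) * solX d n a l) := by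
  ext k
  have hcoeff : coeff k (psD d (solX d n a j)) = Mmat n a (solY d n a k) j := by
    unfold psD psD1 solX
    rw [map_add, coeff_mk, show ∀ f : PowerSeries K, f.derivativeFun = derivative K f from fun _ => rfl, coeff_derivativeFun, coeff_mk, coeff_mk]
    have hY : solY d n a (k + 1) j
        = ((k : K) + 1)⁻¹ * (Mmat n a (solY d n a k) j - d (solY d n a k j)) := rfl
    rw [hY]
    have hc : ((k : K) + 1) ≠ 0 := Nat.cast_add_one_ne_zero k
    field_simp
    ring
  rw [hcoeff]
  by_cases h : (j : ℕ) + 1 < n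
  · rw [Mmat, dif_pos h, dif_pos h, solX, coeff_mk]
  · rw [Mmat, dif_neg h, dif_neg h, map_neg, map_sum]
    congr 1
    refine Finset.sum_congr rfl fun l _ => ?_
    rw [coeff_C_mul, solX, coeff_mk]

lemma iter_solX (hn : 1 ≤ n) :
    ∀ (m : ℕ) (hm : m < n), (psD d)^[m] (solX d n a ⟨0, hn⟩) = solX d n a ⟨m, hm⟩ := by
  intro m
  induction m with
  | zero => intro hm; rfl
  | succ m ih =>
    intro hm
    have hm' : m < n := by omega
    rw [Function.iterate_succ_apply', ih hm', psD_solX]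
    exact dif_pos hm

lemma iter_solX_top (hn : 1 ≤ n) :
    (psD d)^[n] (solX d n a ⟨0, hn⟩)
      = -(∑ l : Fin n, PowerSeries.C (a l / a n) * solX d n a l) := by
  obtain ⟨m, rfl⟩ : ∃ m, n = m + 1 := ⟨n - 1, by omega⟩
  rw [Function.iterate_succ_apply', iter_solX d _ a hn m (by omega), psD_solX]
  exact dif_neg (by simp)

lemma sol_total (hn : 1 ≤ n) (han : a n ≠ 0) :
    ∑ i ∈ Finset.range (n + 1), PowerSeries.C (a i) * (psD d)^[i] (solX d n a ⟨0, hn⟩)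
      = 0 := by
  rw [Finset.sum_range_succ, iter_solX_top d n a hn]
  have h1 : ∑ i ∈ Finset.range n, PowerSeries.C (a i) * (psD d)^[i] (solX d n a ⟨0, hn⟩)
      = ∑ l : Fin n, PowerSeries.C (a l) * solX d n a l := by
    rw [← Fin.sum_univ_eq_sum_range]
    refine Finset.sum_congr rfl fun l _ => ?_
    rw [iter_solX d n a hn l.val l.isLt]
  rw [h1, mul_neg, Finset.mul_sum]
  have h2 : ∀ l : Fin n, PowerSeries.C (a n) * (PowerSeries.C (a l / a n) * solX d n a l)
      = PowerSeries.C (a l) * solX d n a l := by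
    intro l
    rw [← mul_assoc, ← map_mul, mul_comm (a n), div_mul_cancel₀ _ han]
  rw [Finset.sum_congr rfl fun l _ => h2 l]
  exact add_neg_cancel _

lemma solX_ne_zero (hn : 1 ≤ n) : solX d n a ⟨0, hn⟩ ≠ 0 := by
  intro h
  have h0 : coeff 0 (solX d n a ⟨0, hn⟩) = 1 := by
    rw [solX, coeff_mk]
    rfl
  rw [h, map_zero] at h0
  exact zero_ne_one h0

end Sol

section Frac

variable {A : Type} [CommRing A] [IsDomain A] (δ : A → A)

/-- Extension of a derivation to the fraction field by the quotient rule. -/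
noncomputable def fracD (x : FractionRing A) : FractionRing A :=
  let p := IsLocalization.sec (nonZeroDivisors A) x
  (algebraMap A (FractionRing A) (δ p.1) * algebraMap A (FractionRing A) (p.2 : A)
    - algebraMap A (FractionRing A) p.1 * algebraMap A (FractionRing A) (δ (p.2 : A)))
    / (algebraMap A (FractionRing A) (p.2 : A)) ^ 2

variable (hadd : ∀ x y : A, δ (x + y) = δ x + δ y)
  (hmul : ∀ x y : A, δ (x * y) = x * δ y + δ x * y)

include hmul in
lemma frac_key_identity (a b a' b' : A) (h1 : a * b' = a' * b) :
    (δ a * b - a * δ b) * b' ^ 2 = (δ a' * b' - a' * δ b') * b ^ 2 := by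
  have h2 : δ (a * b') = δ (a' * b) := by rw [h1]
  rw [hmul, hmul] at h2
  linear_combination (b * b') * h2 - (δ b * b' + δ b' * b) * h1

include hadd hmul in
lemma fracD_spec (x : FractionRing A) (p q : A) (hq : q ≠ 0)
    (hx : x * algebraMap A (FractionRing A) q = algebraMap A (FractionRing A) p) :
    fracD δ x = (algebraMap A (FractionRing A) (δ p) * algebraMap A (FractionRing A) q
      - algebraMap A (FractionRing A) p * algebraMap A (FractionRing A) (δ q))
      / (algebraMap A (FractionRing A) q) ^ 2 := by
  set ψ := algebraMap A (FractionRing A) with hψ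
  have hinj : Function.Injective ψ := IsFractionRing.injective A (FractionRing A)
  set p0 := (IsLocalization.sec (nonZeroDivisors A) x).1 with hp0
  set q0 := ((IsLocalization.sec (nonZeroDivisors A) x).2 : A) with hq0
  have hx0 : x * ψ q0 = ψ p0 := IsLocalization.sec_spec _ x
  have hq00 : q0 ≠ 0 := nonZeroDivisors.coe_ne_zero _
  have hψq : ψ q ≠ 0 := fun h => hq (hinj (by rw [h, map_zero]))
  have hψq0 : ψ q0 ≠ 0 := fun h => hq00 (hinj (by rw [h, map_zero]))
  have hcross : p0 * q = p * q0 := by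
    apply hinj
    rw [map_mul, map_mul, ← hx0, ← hx]
    ring
  have hgoal : fracD δ x = (ψ (δ p0) * ψ q0 - ψ p0 * ψ (δ q0)) / ψ q0 ^ 2 := rfl
  rw [hgoal, div_eq_div_iff (pow_ne_zero 2 hψq0) (pow_ne_zero 2 hψq)]
  have e1 : ψ (δ p0) * ψ q0 - ψ p0 * ψ (δ q0) = ψ (δ p0 * q0 - p0 * δ q0) := by
    rw [map_sub, map_mul, map_mul]
  have e2 : ψ (δ p) * ψ q - ψ p * ψ (δ q) = ψ (δ p * q - p * δ q) := by
    rw [map_sub, map_mul, map_mul]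
  rw [e1, e2, ← map_pow, ← map_pow, ← map_mul, ← map_mul]
  exact congrArg ψ (frac_key_identity δ hmul p0 q0 p q hcross)

include hadd hmul in
lemma fracD_add (x y : FractionRing A) : fracD δ (x + y) = fracD δ x + fracD δ y := by
  set ψ := algebraMap A (FractionRing A) with hψ
  have hinj : Function.Injective ψ := IsFractionRing.injective A (FractionRing A)
  obtain ⟨⟨px, qx⟩, hx⟩ : ∃ p : A × (nonZeroDivisors A), x * ψ p.2 = ψ p.1 :=
    ⟨IsLocalization.sec (nonZeroDivisors A) x, IsLocalization.sec_spec _ x⟩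
  obtain ⟨⟨py, qy⟩, hy⟩ : ∃ p : A × (nonZeroDivisors A), y * ψ p.2 = ψ p.1 :=
    ⟨IsLocalization.sec (nonZeroDivisors A) y, IsLocalization.sec_spec _ y⟩
  have hqx : (qx : A) ≠ 0 := nonZeroDivisors.coe_ne_zero _
  have hqy : (qy : A) ≠ 0 := nonZeroDivisors.coe_ne_zero _
  have hψqx : ψ (qx : A) ≠ 0 := fun h => hqx (hinj (by rw [h, map_zero]))
  have hψqy : ψ (qy : A) ≠ 0 := fun h => hqy (hinj (by rw [h, map_zero]))
  have hsum : (x + y) * ψ ((qx : A) * (qy : A)) = ψ (px * (qy : A) + py * (qx : A)) := by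
    rw [map_mul, map_add, map_mul, map_mul, ← hx, ← hy]
    ring
  rw [fracD_spec δ hadd hmul (x + y) _ _ (mul_ne_zero hqx hqy) hsum,
    fracD_spec δ hadd hmul x px (qx : A) hqx hx,
    fracD_spec δ hadd hmul y py (qy : A) hqy hy]
  rw [hadd, hmul, hmul, hmul]
  simp only [map_add, map_mul]
  field_simp
  ring

include hadd hmul in
lemma fracD_mul (x y : FractionRing A) :
    fracD δ (x * y) = x * fracD δ y + fracD δ x * y := by
  set ψ := algebraMap A (FractionRing A) with hψ
  have hinj : Function.Injective ψ := IsFractionRing.injective A (FractionRing A)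
  obtain ⟨⟨px, qx⟩, hx⟩ : ∃ p : A × (nonZeroDivisors A), x * ψ p.2 = ψ p.1 :=
    ⟨IsLocalization.sec (nonZeroDivisors A) x, IsLocalization.sec_spec _ x⟩
  obtain ⟨⟨py, qy⟩, hy⟩ : ∃ p : A × (nonZeroDivisors A), y * ψ p.2 = ψ p.1 :=
    ⟨IsLocalization.sec (nonZeroDivisors A) y, IsLocalization.sec_spec _ y⟩
  have hqx : (qx : A) ≠ 0 := nonZeroDivisors.coe_ne_zero _
  have hqy : (qy : A) ≠ 0 := nonZeroDivisors.coe_ne_zero _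
  have hψqx : ψ (qx : A) ≠ 0 := fun h => hqx (hinj (by rw [h, map_zero]))
  have hψqy : ψ (qy : A) ≠ 0 := fun h => hqy (hinj (by rw [h, map_zero]))
  have hprod : (x * y) * ψ ((qx : A) * (qy : A)) = ψ (px * py) := by
    rw [map_mul, map_mul, ← hx, ← hy]
    ring
  have hxval : x = ψ px / ψ (qx : A) := by
    rw [eq_div_iff hψqx]; exact hx
  have hyval : y = ψ py / ψ (qy : A) := by
    rw [eq_div_iff hψqy]; exact hy
  rw [fracD_spec δ hadd hmul (x * y) _ _ (mul_ne_zero hqx hqy) hprod,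
    fracD_spec δ hadd hmul x px (qx : A) hqx hx,
    fracD_spec δ hadd hmul y py (qy : A) hqy hy, hxval, hyval]
  rw [hmul px py, hmul (qx : A) (qy : A)]
  simp only [map_add, map_mul]
  field_simp
  ring

include hadd hmul in
lemma fracD_algebraMap (a : A) :
    fracD δ (algebraMap A (FractionRing A) a) = algebraMap A (FractionRing A) (δ a) := by
  have h1 : algebraMap A (FractionRing A) a * algebraMap A (FractionRing A) 1
      = algebraMap A (FractionRing A) a := by rw [map_one, mul_one]
  rw [fracD_spec δ hadd hmul _ a 1 one_ne_zero h1]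
  have hδ1 : δ (1 : A) = 0 := by
    have := hmul 1 1
    rw [mul_one, one_mul, mul_one] at this
    exact (left_eq_add.1 this)
  rw [hδ1, map_zero, map_one, mul_zero, sub_zero, mul_one, one_pow, div_one]

end Frac



set_option maxHeartbeats 1000000 in
/-- Let K be a differential field of characteristic 0 and H = AB⁻¹
(A, B ∈ K[∂], B ≠ 0) a fraction of scalar differential operators. The following are
equivalent:
(i) the order of B is minimal among all right fractional decompositions of H (where
CD⁻¹ = AB⁻¹ is expressed, via the Ore condition, by the existence of non-zero E, F
with AE = CF and BE = DF);
(ii) A and B have no non-invertible common right divisor in K[∂];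
(iii) A and B have no common non-zero kernel element in the linear closure of K
(equivalently, in any differential field extension of K). -/
theorem stmt_16 (K : Type) [Field K] [CharZero K] (d : K → K)
    (hd_add : ∀ a b : K, d (a + b) = d a + d b)
    (hd_mul : ∀ a b : K, d (a * b) = a * d b + d a * b)
    (R : Type) [Ring R] (S : DiffOpRing K d R)
    (A B : R) (hB : B ≠ 0) :
    ((∀ C D : R, D ≠ 0 →
        (∃ E F : R, E ≠ 0 ∧ F ≠ 0 ∧ A * E = C * F ∧ B * E = D * F) →
        S.ord B ≤ S.ord D) ↔
      (∀ A₁ B₁ D : R, A = A₁ * D → B = B₁ * D → IsUnit D)) ∧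
    ((∀ A₁ B₁ D : R, A = A₁ * D → B = B₁ * D → IsUnit D) ↔
      (∀ (L : Type) (_ : Field L) (ι : K →+* L) (dL : L → L),
        (∀ a b : L, dL (a + b) = dL a + dL b) →
        (∀ a b : L, dL (a * b) = a * dL b + dL a * b) →
        (∀ x : K, dL (ι x) = ι (d x)) →
        ∀ x : L, ((S.coeff A).sum fun i a => ι a * dL^[i] x) = 0 →
          ((S.coeff B).sum fun i a => ι a * dL^[i] x) = 0 → x = 0)) := by
  have hd0 : d 0 = 0 := by
    have := hd_add 0 0
    rw [add_zero] at this
    exact (left_eq_add.1 this)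
  haveI : Nontrivial R := nontrivial_of_ne B 0 hB
  refine ⟨S.first_iff hd0 A B hB, ?_, ?_⟩
  · -- (ii) → (iii)
    intro hcop L fL ι' dL hLa hLm hLe x hxA hxB
    letI := fL
    exact S.no_common_kernel hd0 ι' dL hLa hLm hLe A B hcop x hxA hxB
  · -- (iii) → (ii)
    intro hker A₁ B₁ D hA hBb
    by_contra hnu
    have hD0 : D ≠ 0 := fun h => hB (by rw [hBb, h, mul_zero])
    have hordD : S.ord D ≠ 0 := fun h => hnu ((S.isUnit_iff hd0).2 ⟨hD0, h⟩)
    have hn1 : 1 ≤ S.ord D := by omega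
    set n := S.ord D with hn
    set a : ℕ → K := fun i => S.coeff D i with ha
    have han : a n ≠ 0 := S.coeff_ord_ne_zero hD0
    set L := FractionRing (PowerSeries K) with hLdef
    set ψ : PowerSeries K →+* L := algebraMap (PowerSeries K) L with hψ
    have hinj : Function.Injective ψ := IsFractionRing.injective _ _
    have δadd := psD_add d hd_add
    have δmul := psD_mul d hd_add hd_mul
    set dL : L → L := fracD (psD d) with hdL
    have dLadd : ∀ x y : L, dL (x + y) = dL x + dL y := fracD_add (psD d) δadd δmul
    have dLmul : ∀ x y : L, dL (x * y) = x * dL y + dL x * y := fracD_mul (psD d) δadd δmul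
    have dLalg : ∀ f : PowerSeries K, dL (ψ f) = ψ (psD d f) :=
      fracD_algebraMap (psD d) δadd δmul
    set ι' : K →+* L := ψ.comp (PowerSeries.C) with hι
    have hext : ∀ y : K, dL (ι' y) = ι' (d y) := by
      intro y
      show dL (ψ (PowerSeries.C y)) = ψ (PowerSeries.C (d y))
      rw [dLalg, psD_C d hd_add]
    set x0 : PowerSeries K := solX d n a ⟨0, hn1⟩ with hx0def
    set x : L := ψ x0 with hx
    have hxne : x ≠ 0 := by
      intro h
      exact solX_ne_zero d n a hn1 (hinj (by rw [← hx, h, map_zero]))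
    have hiter : ∀ (i : ℕ) (f : PowerSeries K), dL^[i] (ψ f) = ψ ((psD d)^[i] f) := by
      intro i
      induction i with
      | zero => intro f; rfl
      | succ i ih =>
        intro f
        rw [Function.iterate_succ_apply', ih, Function.iterate_succ_apply']
        exact dLalg _
    have hevD : S.ev ι' dL D x = 0 := by
      show (S.coeff D).sum (fun i c => ι' c * dL^[i] x) = 0
      have hsub : (S.coeff D).support ⊆ Finset.range (n + 1) := by
        intro i hi
        rw [Finset.mem_range]
        have h2 : i ≤ S.ord D := Finset.le_sup (f := id) hi
        omega
      rw [Finsupp.sum_of_support_subset _ hsub _ (fun i _ => by simp)]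
      have hterm : ∀ i ∈ Finset.range (n + 1), ι' (S.coeff D i) * dL^[i] x
          = ψ (PowerSeries.C (a i) * (psD d)^[i] x0) := by
        intro i _
        rw [hx, hiter, map_mul]
        rfl
      rw [Finset.sum_congr rfl hterm, ← map_sum, sol_total d n a hn1 han, map_zero]
    have hevA : S.ev ι' dL A x = 0 := by
      rw [hA, S.ev_mul hd0 ι' dL dLadd dLmul hext, hevD, S.ev_zero_right ι' dL dLadd]
    have hevB : S.ev ι' dL B x = 0 := by
      rw [hBb, S.ev_mul hd0 ι' dL dLadd dLmul hext, hevD, S.ev_zero_right ι' dL dLadd]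
    exact hxne (hker L inferInstance ι' dL dLadd dLmul hext x hevA hevB)
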